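/- Let a group G act on a probability space (X, μ) by measure-preserving transformations, and let U ⊆ X be measurable with μ(U) > 0. Suppose that for every g ∈ G, either μ(gU Δ U) = 0 or μ(gU ∩ U) = 0. Then H = {g ∈ G : μ(gU Δ U) = 0} is a subgroup of G, and its index satisfies [G : H] ≤ 1/μ(U); in particular H has finite index. -/

import Mathlib

open MeasureTheory
open scoped Pointwise

theorem stmt_16 {G X : Type*} [Group G] [MeasurableSpace X] [MulAction G X]
    (μ : Measure X) [IsProbabilityMeasure μ]
    (hmp : ∀ g : G, MeasurePreserving (fun x => g • x) μ μ)
    (U : Set X) (hU : MeasurableSet U) (hUpos : 0 < μ U)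
    (hdich : ∀ g : G, μ (symmDiff (g • U) U) = 0 ∨ μ ((g • U) ∩ U) = 0) :
    ∃ H : Subgroup G, (H : Set G) = {g : G | μ (symmDiff (g • U) U) = 0} ∧
      H.index ≠ 0 ∧ (H.index : ENNReal) ≤ 1 / μ U := by
  have meas_smul : ∀ (g : G) (A : Set X), μ (g • A) = μ A := by
    intro g A
    let eg : X ≃ᵐ X :=
      ⟨⟨fun x => g⁻¹ • x, fun x => g • x, fun x => smul_inv_smul g x,
        fun x => inv_smul_smul g x⟩, (hmp g⁻¹).measurable, (hmp g).measurable⟩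
    have hep : MeasurePreserving eg μ μ := hmp g⁻¹
    have hpre : eg ⁻¹' A = g • A := by
      ext x
      simp [eg, Set.mem_smul_set_iff_inv_smul_mem]
    rw [← hpre]
    exact hep.measure_preimage_equiv A
  have smul_meas : ∀ (g : G), MeasurableSet (g • U) := by
    intro g
    have hpre : (fun x => g⁻¹ • x) ⁻¹' U = g • U := by
      ext x
      simp [Set.mem_smul_set_iff_inv_smul_mem]
    rw [← hpre]
    exact (hmp g⁻¹).measurable hU
  set H : Subgroup G :=
    { carrier := {g : G | μ (symmDiff (g • U) U) = 0}
      one_mem' := by simp; exact Filter.EventuallyEq.rfl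
      mul_mem' := by
        intro a b ha hb
        simp only [Set.mem_setOf_eq] at ha hb ⊢
        have h1 : symmDiff ((a * b) • U) U ⊆
            symmDiff ((a * b) • U) (a • U) ∪ symmDiff (a • U) U :=
          symmDiff_triangle _ _ _
        have h2 : symmDiff ((a * b) • U) (a • U) = a • symmDiff (b • U) U := by
          rw [Set.smul_set_symmDiff, smul_smul]
        have := measure_mono (μ := μ) h1
        rw [h2] at this
        refine le_antisymm (this.trans ?_) (zero_le)
        calc μ (a • symmDiff (b • U) U ∪ symmDiff (a • U) U)
            ≤ μ (a • symmDiff (b • U) U) + μ (symmDiff (a • U) U) := measure_union_le _ _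
        _ = 0 := by rw [meas_smul, hb, ha, add_zero]
      inv_mem' := by
        intro a ha
        simp only [Set.mem_setOf_eq] at ha ⊢
        have : a • symmDiff (a⁻¹ • U) U = symmDiff U (a • U) := by
          rw [Set.smul_set_symmDiff, smul_inv_smul]
        calc μ (symmDiff (a⁻¹ • U) U) = μ (a • symmDiff (a⁻¹ • U) U) := (meas_smul _ _).symm
        _ = μ (symmDiff U (a • U)) := by rw [this]
        _ = μ (symmDiff (a • U) U) := by rw [symmDiff_comm]
        _ = 0 := ha }
  -- key: distinct cosets give a.e. disjoint translates
  have hdisj : ∀ q q' : G ⧸ H, q ≠ q' →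
      AEDisjoint μ (q.out • U) (q'.out • U) := by
    intro q q' hqq'
    set g := q.out
    set h := q'.out
    have hne : g⁻¹ * h ∉ H := by
      intro hmem
      apply hqq'
      rw [← QuotientGroup.out_eq' q, ← QuotientGroup.out_eq' q']
      exact (QuotientGroup.eq (s := H)).mpr hmem
    have hinter : μ (((g⁻¹ * h) • U) ∩ U) = 0 := by
      rcases hdich (g⁻¹ * h) with h1 | h2
      · exact absurd h1 hne
      · exact h2
    have heq : (g • U) ∩ (h • U) = g • (U ∩ (g⁻¹ * h) • U) := by
      rw [Set.smul_set_inter, smul_smul, mul_inv_cancel_left]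
    show μ ((g • U) ∩ (h • U)) = 0
    rw [heq, meas_smul, Set.inter_comm]
    exact hinter
  -- bound on cardinality of any finset of cosets
  have hcard : ∀ s : Finset (G ⧸ H), (s.card : ENNReal) * μ U ≤ 1 := by
    intro s
    have hsum : ∑ q ∈ s, μ (q.out • U) = μ (⋃ q ∈ s, q.out • U) := by
      rw [measure_biUnion_finset₀]
      · intro q hq q' hq' hne
        exact hdisj q q' hne
      · intro q _
        exact (smul_meas _).nullMeasurableSet
    have hle : μ (⋃ q ∈ s, q.out • U) ≤ 1 := by
      rw [← measure_univ (μ := μ)]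
      exact measure_mono (Set.subset_univ _)
    have : ∑ q ∈ s, μ (q.out • U) = (s.card : ENNReal) * μ U := by
      rw [Finset.sum_congr rfl (fun q _ => meas_smul q.out U), Finset.sum_const,
        nsmul_eq_mul]
    rw [← this]
    rw [hsum]
    exact hle
  have hμU_ne : μ U ≠ 0 := hUpos.ne'
  have hμU_ne_top : μ U ≠ ⊤ := (measure_lt_top μ U).ne
  -- finiteness of the quotient
  have hfin : Finite (G ⧸ H) := by
    by_contra hinf
    rw [not_finite_iff_infinite] at hinf
    have hdivtop : 1 / μ U ≠ ⊤ := by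
      simp [ENNReal.div_eq_top, hμU_ne]
    obtain ⟨n, hn⟩ := ENNReal.exists_nat_gt hdivtop.lt_top.ne
    obtain ⟨t, -, htcard⟩ :=
      (Set.infinite_univ (α := G ⧸ H)).exists_subset_card_eq n
    have := hcard t
    rw [htcard] at this
    have hle : (n : ENNReal) ≤ 1 / μ U :=
      (ENNReal.le_div_iff_mul_le (Or.inl hμU_ne) (Or.inl hμU_ne_top)).mpr this
    exact absurd hle (not_le.mpr hn)
  refine ⟨H, rfl, Subgroup.index_ne_zero_of_finite, ?_⟩
  have : Fintype (G ⧸ H) := Fintype.ofFinite _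
  have hidx : H.index = (Finset.univ : Finset (G ⧸ H)).card := by
    rw [Subgroup.index, Nat.card_eq_fintype_card, Finset.card_univ]
  rw [hidx]
  exact (ENNReal.le_div_iff_mul_le (Or.inl hμU_ne) (Or.inl hμU_ne_top)).mpr
    (hcard Finset.univ)
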